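/- Let M ≥ 1 and N ≥ 0 be integers. For each j ∈ {1,…,M} let α_j ∈ (0,1) and let w_j > 0 be real weights, and set Q = (Σ_{j=1}^M w_j)^{−1}. Define a_l^α = (l+1)^{1−α} − l^{1−α} for integers l ≥ 0. Suppose x_0, x_1, …, x_N are nonnegative real numbers satisfying, for every 1 ≤ n ≤ N, x_n ≤ Q Σ_{j=1}^M w_j [ Σ_{l=1}^{n−1} (a_{n−l−1}^{α_j} − a_{n−l}^{α_j}) x_l + a_{n−1}^{α_j} x_0 ]. Then x_n ≤ x_0 for every 0 ≤ n ≤ N. -/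

import Mathlib

/-- The L1-scheme coefficients `a_l^α = (l+1)^{1-α} - l^{1-α}`. -/
noncomputable def aL1 (α : ℝ) (l : ℕ) : ℝ :=
  ((l : ℝ) + 1) ^ (1 - α) - (l : ℝ) ^ (1 - α)

lemma aL1_nonneg {α : ℝ} (hα : α ∈ Set.Ioo (0 : ℝ) 1) (l : ℕ) : 0 ≤ aL1 α l := by
  have : ((l : ℝ)) ^ (1 - α) ≤ ((l : ℝ) + 1) ^ (1 - α) :=
    Real.rpow_le_rpow (by positivity) (by linarith) (by linarith [hα.2])
  simpa [aL1] using this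

lemma aL1_anti {α : ℝ} (hα : α ∈ Set.Ioo (0 : ℝ) 1) (l : ℕ) :
    aL1 α (l + 1) ≤ aL1 α l := by
  set p := 1 - α with hp
  have hp0 : 0 < p := by simp [hp]; linarith [hα.2]
  have hp1 : p ≤ 1 := by simp [hp]; linarith [hα.1]
  have hc := Real.concaveOn_rpow hp0.le hp1
  have key := hc.2 (Set.mem_Ici.mpr (by positivity : (0:ℝ) ≤ (l : ℝ)))
    (Set.mem_Ici.mpr (by positivity : (0:ℝ) ≤ (l : ℝ) + 2))
    (show (0:ℝ) ≤ 1/2 by norm_num) (show (0:ℝ) ≤ 1/2 by norm_num)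
    (show (1/2 : ℝ) + 1/2 = 1 by norm_num)
  have hmid : (1/2 : ℝ) • (l : ℝ) + (1/2 : ℝ) • ((l : ℝ) + 2) = (l : ℝ) + 1 := by simp only [smul_eq_mul]; ring
  rw [hmid] at key
  simp only [smul_eq_mul] at key
  have : ((l : ℝ) + 2) ^ p + (l : ℝ) ^ p ≤ 2 * ((l : ℝ) + 1) ^ p := by linarith
  simp only [aL1, ← hp]
  push_cast
  have h2 : ((l:ℝ) + 1 + 1) = (l:ℝ) + 2 := by ring
  rw [h2]
  linarith

lemma aL1_telescope (α : ℝ) (n : ℕ) (hn : 1 ≤ n) :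
    ∑ l ∈ Finset.Icc 1 (n - 1), (aL1 α (n - l - 1) - aL1 α (n - l))
      = aL1 α 0 - aL1 α (n - 1) := by
  have h : ∑ l ∈ Finset.Icc 1 (n - 1), (aL1 α (n - l - 1) - aL1 α (n - l))
      = ∑ i ∈ Finset.range (n - 1), (aL1 α i - aL1 α (i + 1)) := by
    refine Finset.sum_nbij' (fun l => n - 1 - l) (fun i => n - 1 - i) ?_ ?_ ?_ ?_ ?_
    · intro l hl
      simp only [Finset.mem_Icc] at hl
      simp only [Finset.mem_range]
      omega
    · intro i hi
      simp only [Finset.mem_range] at hi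
      simp only [Finset.mem_Icc]
      omega
    · intro l hl; simp only [Finset.mem_Icc] at hl; omega
    · intro i hi; simp only [Finset.mem_range] at hi; omega
    · intro l hl
      simp only [Finset.mem_Icc] at hl
      have h1 : n - 1 - l = n - l - 1 := by omega
      have h2 : n - l - 1 + 1 = n - l := by omega
      rw [h1, h2]
  rw [h, Finset.sum_range_sub' (fun i => aL1 α i)]

theorem discrete_stability_induction
    (M N : ℕ) (hM : 1 ≤ M) (α w : ℕ → ℝ)
    (hα : ∀ j ∈ Finset.Icc 1 M, α j ∈ Set.Ioo (0 : ℝ) 1)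
    (hw : ∀ j ∈ Finset.Icc 1 M, 0 < w j)
    (x : ℕ → ℝ) (hx : ∀ n ≤ N, 0 ≤ x n)
    (hrec : ∀ n, 1 ≤ n → n ≤ N →
      x n ≤ (∑ j ∈ Finset.Icc 1 M, w j)⁻¹ *
        ∑ j ∈ Finset.Icc 1 M, w j *
          ((∑ l ∈ Finset.Icc 1 (n - 1),
              (aL1 (α j) (n - l - 1) - aL1 (α j) (n - l)) * x l) +
            aL1 (α j) (n - 1) * x 0)) :
    ∀ n ≤ N, x n ≤ x 0 := by
  have hWpos : 0 < ∑ j ∈ Finset.Icc 1 M, w j :=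
    Finset.sum_pos hw ⟨1, by simp [hM]⟩
  intro n
  induction n using Nat.strong_induction_on with
  | _ n ih =>
    intro hnN
    rcases Nat.eq_zero_or_pos n with rfl | hn
    · exact le_refl _
    · have key : ∀ j ∈ Finset.Icc 1 M,
        w j * ((∑ l ∈ Finset.Icc 1 (n - 1),
            (aL1 (α j) (n - l - 1) - aL1 (α j) (n - l)) * x l) +
          aL1 (α j) (n - 1) * x 0) ≤ w j * x 0 := by
        intro j hj
        have hαj := hα j hj
        refine mul_le_mul_of_nonneg_left ?_ (hw j hj).le
        have hsum : (∑ l ∈ Finset.Icc 1 (n - 1),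
            (aL1 (α j) (n - l - 1) - aL1 (α j) (n - l)) * x l)
            ≤ (∑ l ∈ Finset.Icc 1 (n - 1),
                (aL1 (α j) (n - l - 1) - aL1 (α j) (n - l)) * x 0) := by
          refine Finset.sum_le_sum ?_
          intro l hl
          simp only [Finset.mem_Icc] at hl
          have hcoef : 0 ≤ aL1 (α j) (n - l - 1) - aL1 (α j) (n - l) := by
            have h1 : n - l - 1 + 1 = n - l := by omega
            have := aL1_anti hαj (n - l - 1)
            rw [h1] at this
            linarith
          exact mul_le_mul_of_nonneg_left
            (ih l (by omega) (by omega)) hcoef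
        have htel := aL1_telescope (α j) n hn
        have ha0 : aL1 (α j) 0 = 1 := by simp [aL1, Real.zero_rpow (by linarith [hαj.2] : (1 : ℝ) - α j ≠ 0)]
        calc (∑ l ∈ Finset.Icc 1 (n - 1),
              (aL1 (α j) (n - l - 1) - aL1 (α j) (n - l)) * x l) +
            aL1 (α j) (n - 1) * x 0
            ≤ (∑ l ∈ Finset.Icc 1 (n - 1),
                (aL1 (α j) (n - l - 1) - aL1 (α j) (n - l)) * x 0) +
              aL1 (α j) (n - 1) * x 0 := by linarith
          _ = (aL1 (α j) 0 - aL1 (α j) (n - 1)) * x 0 + aL1 (α j) (n - 1) * x 0 := by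
              rw [← Finset.sum_mul, htel]
          _ = x 0 := by rw [ha0]; ring
      calc x n ≤ (∑ j ∈ Finset.Icc 1 M, w j)⁻¹ *
            ∑ j ∈ Finset.Icc 1 M, w j *
              ((∑ l ∈ Finset.Icc 1 (n - 1),
                  (aL1 (α j) (n - l - 1) - aL1 (α j) (n - l)) * x l) +
                aL1 (α j) (n - 1) * x 0) := hrec n hn hnN
        _ ≤ (∑ j ∈ Finset.Icc 1 M, w j)⁻¹ * ∑ j ∈ Finset.Icc 1 M, w j * x 0 := by
            exact mul_le_mul_of_nonneg_left (Finset.sum_le_sum key) (by positivity)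
        _ = x 0 := by rw [← Finset.sum_mul, ← mul_assoc, inv_mul_cancel₀ hWpos.ne', one_mul]
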